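/- The Laplace mechanism satisfies ε-differential privacy: if f : X → ℝ has sensitivity Δ = sup over adjacent x, x' of |f(x) - f(x')|, and M(x) = f(x) + Lap(Δ/ε) noise, then for all adjacent x, x' and all measurable S ⊆ ℝ, P[M(x) ∈ S] ≤ exp(ε) · P[M(x') ∈ S]. -/

import Mathlib

open MeasureTheory Real

/-- Laplace measure with scale `b` centered at `c`: density `(1/(2b)) exp(-|s-c|/b)`. -/
noncomputable def lapMeasure (b c : ℝ) : Measure ℝ :=
  volume.withDensity fun s => ENNReal.ofReal ((1 / (2 * b)) * Real.exp (-|s - c| / b))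

/-- The Laplace mechanism satisfies ε-differential privacy. -/
theorem laplace_mechanism_dp {X : Type*} (adj : X → X → Prop) (hsym : Symmetric adj)
    (f : X → ℝ) (Δ ε : ℝ) (hΔ : 0 < Δ) (hε : 0 < ε)
    (hsens : IsLUB {d : ℝ | ∃ x x', adj x x' ∧ d = |f x - f x'|} Δ)
    (M : X → Measure ℝ) (hM : ∀ x, M x = lapMeasure (Δ / ε) (f x)) :
    ∀ x x', adj x x' → ∀ S : Set ℝ, MeasurableSet S →
      M x S ≤ ENNReal.ofReal (Real.exp ε) * M x' S := by
  intro x x' hadj S hS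
  have hb : (0:ℝ) < Δ / ε := div_pos hΔ hε
  have hd : |f x - f x'| ≤ Δ := hsens.1 ⟨x, x', hadj, rfl⟩
  rw [hM x, hM x', lapMeasure, lapMeasure, withDensity_apply _ hS, withDensity_apply _ hS]
  have hmeas : Measurable fun s : ℝ =>
      ENNReal.ofReal ((1 / (2 * (Δ / ε))) * Real.exp (-|s - f x'| / (Δ / ε))) := by
    apply Measurable.ennreal_ofReal
    exact (measurable_const.mul (((measurable_id.sub measurable_const).abs.neg.div_const
      _).exp))
  rw [← lintegral_const_mul _ hmeas]
  apply lintegral_mono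
  intro s
  dsimp only
  rw [← ENNReal.ofReal_mul (Real.exp_pos ε).le]
  apply ENNReal.ofReal_le_ofReal
  rw [show Real.exp ε * ((1 / (2 * (Δ / ε))) * Real.exp (-|s - f x'| / (Δ / ε)))
      = (1 / (2 * (Δ / ε))) * (Real.exp ε * Real.exp (-|s - f x'| / (Δ / ε))) by ring,
    ← Real.exp_add]
  apply mul_le_mul_of_nonneg_left _ (by positivity)
  apply Real.exp_le_exp.2
  have h1 : |s - f x'| - |s - f x| ≤ |f x - f x'| := by
    have h := abs_sub_abs_le_abs_sub (s - f x') (s - f x)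
    have he : (s - f x') - (s - f x) = f x - f x' := by ring
    rw [he] at h
    exact h
  set b := Δ / ε with hbdef
  have hεb : ε = Δ / b := by rw [hbdef]; field_simp
  rw [hεb, ← add_div]
  gcongr
  linarith
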